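/- Let E ⊆ {(i,j) : 1 ≤ i ≤ j ≤ n} be an index set of pairs and let 𝓔 = {e_i + e_j : (i,j) ∈ E} ⊆ ℕⁿ be the corresponding set of exponent vectors of degree 2. The span ℝ[x]_𝓔 of the monomials {x^α : α ∈ 𝓔} contains a polynomial that is strictly positive on the standard simplex Δ if and only if (i,i) ∈ E for every i ∈ {1,…,n}. -/
import Mathlib


/-- A polynomial in the span of the monomials `x_i * x_j` for `(i,j) ∈ E`,
given by coefficients `c`, evaluated at `x`. -/
def evalE {n : ℕ} (E : Finset (Fin n × Fin n)) (c : Fin n × Fin n → ℝ)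
    (x : Fin n → ℝ) : ℝ :=
  ∑ p ∈ E, c p * x p.1 * x p.2

/-- `ℝ[x]_𝓔` is `Δ`-full (some member is strictly positive on the standard
simplex `Δ`) if and only if all diagonal pairs `(i,i)` belong to `E`. -/
theorem deltaFull_iff_diagonal {n : ℕ} (E : Finset (Fin n × Fin n))
    (hE : ∀ p ∈ E, p.1 ≤ p.2) :
    (∃ c : Fin n × Fin n → ℝ, ∀ x ∈ stdSimplex ℝ (Fin n), 0 < evalE E c x) ↔
      ∀ i : Fin n, (i, i) ∈ E := by
  constructor
  · rintro ⟨c, hc⟩ i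
    by_contra h
    set x : Fin n → ℝ := fun j => if j = i then 1 else 0 with hx
    have hxm : x ∈ stdSimplex ℝ (Fin n) := by
      constructor
      · intro j; by_cases hj : j = i <;> simp [hx, hj]
      · simp [hx]
    have h0 : evalE E c x = 0 := by
      apply Finset.sum_eq_zero
      intro p hp
      have hne : p ≠ (i, i) := fun hpe => h (hpe ▸ hp)
      by_cases h1 : p.1 = i
      · by_cases h2 : p.2 = i
        · exact absurd (Prod.ext h1 h2) hne
        · simp [hx, h2]
      · simp [hx, h1]
    have := hc x hxm
    rw [h0] at this
    exact lt_irrefl 0 this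
  · intro hdiag
    refine ⟨fun p => if p.1 = p.2 then 1 else 0, fun x hx => ?_⟩
    have hfilter : E.filter (fun p => p.1 = p.2) =
        Finset.image (fun i : Fin n => (i, i)) Finset.univ := by
      ext p
      simp only [Finset.mem_filter, Finset.mem_image, Finset.mem_univ, true_and]
      constructor
      · rintro ⟨hp, hd⟩
        exact ⟨p.1, Prod.ext rfl hd⟩
      · rintro ⟨i, rfl⟩
        exact ⟨hdiag i, rfl⟩
    have heval : evalE E (fun p => if p.1 = p.2 then 1 else 0) x
        = ∑ i : Fin n, x i * x i := by
      rw [evalE]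
      rw [show (∑ p ∈ E, (if p.1 = p.2 then (1:ℝ) else 0) * x p.1 * x p.2)
          = ∑ p ∈ E.filter (fun p => p.1 = p.2), x p.1 * x p.2 by
        rw [Finset.sum_filter]
        exact Finset.sum_congr rfl fun p _ => by split <;> simp]
      rw [hfilter, Finset.sum_image (fun a _ b _ hab => (Prod.ext_iff.mp hab).1)]
    rw [heval]
    obtain ⟨hnn, hsum⟩ := hx
    have hex : ∃ i, 0 < x i := by
      by_contra hne
      push_neg at hne
      have : ∀ i, x i = 0 := fun i => le_antisymm (hne i) (hnn i)
      simp [this] at hsum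
    obtain ⟨i, hi⟩ := hex
    exact Finset.sum_pos' (fun j _ => mul_self_nonneg _)
      ⟨i, Finset.mem_univ i, mul_pos hi hi⟩
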